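/- arXiv:1901.01090 — 3 statements merged into one kernel-verified Lean document; each statement's English description precedes it below -/
import Mathlib

section
/- For all simple graphs G and H and every d ≥ 1, there exists a graph homomorphism G ⋉ d → H if and only if there exists a graph homomorphism G → H/d. (Blowup and fractionalization are Galois adjoints.) -/
open SimpleGraph

universe u v

/-- The join `G + H` of two simple graphs. -/
def graphJoin {α : Type u} {β : Type v} (G : SimpleGraph α) (H : SimpleGraph β) :
    SimpleGraph (α ⊕ β) where
  Adj x y :=
    match x, y with
    | Sum.inl a, Sum.inl a' => G.Adj a a'
    | Sum.inr b, Sum.inr b' => H.Adj b b'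
    | Sum.inl _, Sum.inr _ => True
    | Sum.inr _, Sum.inl _ => True
  symm := by
    refine ⟨?_⟩
    rintro (a | b) (a' | b') h
    · exact G.adj_symm h
    · trivial
    · trivial
    · exact H.adj_symm h
  loopless := by
    refine ⟨?_⟩
    rintro (a | b) h
    · exact G.irrefl h
    · exact H.irrefl h

/-- The disjunctive product `G * H`. -/
def disjProd {α : Type u} {β : Type v} (G : SimpleGraph α) (H : SimpleGraph β) :
    SimpleGraph (α × β) where
  Adj p q := G.Adj p.1 q.1 ∨ H.Adj p.2 q.2
  symm := ⟨fun p q h => h.imp (fun h' => G.adj_symm h') (fun h' => H.adj_symm h')⟩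
  loopless := ⟨fun p h => h.elim (fun h' => G.irrefl h') (fun h' => H.irrefl h')⟩

/-- The lexicographic product `G ⋉ H`. -/
def lexProd {α : Type u} {β : Type v} (G : SimpleGraph α) (H : SimpleGraph β) :
    SimpleGraph (α × β) where
  Adj p q := G.Adj p.1 q.1 ∨ (p.1 = q.1 ∧ H.Adj p.2 q.2)
  symm := ⟨fun p q h => h.imp (fun h' => G.adj_symm h') (fun h' => ⟨h'.1.symm, H.adj_symm h'.2⟩)⟩
  loopless := ⟨fun p h => h.elim (fun h' => G.irrefl h') (fun h' => H.irrefl h'.2)⟩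

/-- The `d`-fold blowup `G ⋉ d`, i.e. the lexicographic product `G ⋉ K_d`. -/
def blowup {α : Type u} (G : SimpleGraph α) (d : ℕ) : SimpleGraph (α × Fin d) :=
  lexProd G (⊤ : SimpleGraph (Fin d))

/-- The `d`-fractionalization `G/d`: the graph of `d`-cliques of `G`, with two
`d`-cliques adjacent iff they are disjoint and pairwise adjacent. -/
def fracGraph {α : Type u} (G : SimpleGraph α) (d : ℕ) :
    SimpleGraph {S : Finset α // S.card = d ∧ G.IsClique (S : Set α)} where
  Adj S T := S ≠ T ∧ Disjoint S.val T.val ∧ ∀ a ∈ S.val, ∀ b ∈ T.val, G.Adj a b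
  symm := by
    refine ⟨?_⟩
    rintro S T ⟨hne, hd, hadj⟩
    exact ⟨hne.symm, hd.symm, fun b hb a ha => (hadj a ha b hb).symm⟩
  loopless := ⟨fun S h => h.1 rfl⟩

/-- The `n`-fold disjunctive power `G^{*n}`. -/
def disjPow {α : Type u} (G : SimpleGraph α) (n : ℕ) :
    SimpleGraph (Fin n → α) where
  Adj f g := ∃ i, G.Adj (f i) (g i)
  symm := ⟨fun f g ⟨i, h⟩ => ⟨i, h.symm⟩⟩
  loopless := ⟨fun f ⟨i, h⟩ => G.irrefl h⟩

/-- A semiring family of graphs. -/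
structure SemiringFamily where
  V : ℕ → Type u
  F : ∀ n, SimpleGraph (V n)
  isEmpty_zero : IsEmpty (V 0)
  nonempty_one : Nonempty (V 1)
  add_hom : ∀ n m : ℕ, Nonempty (graphJoin (F n) (F m) →g F (n + m))
  mul_hom : ∀ n m : ℕ, Nonempty (disjProd (F n) (F m) →g F (n * m))

/-- The `F`-number: the least `n` such that `G → F_n`. -/
noncomputable def etaF (F : SemiringFamily.{u}) {α : Type v} (G : SimpleGraph α) : ℕ :=
  sInf {n : ℕ | Nonempty (G →g F.F n)}

/-- The fractional `F`-number. -/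
noncomputable def etaFrac (F : SemiringFamily.{u}) {α : Type v} (G : SimpleGraph α) : ℝ :=
  sInf {x : ℝ | ∃ n d : ℕ, 1 ≤ d ∧ Nonempty (G →g fracGraph (F.F n) d) ∧ x = (n : ℝ) / d}

/-- The asymptotic `F`-number. -/
noncomputable def etaAsymp (F : SemiringFamily.{u}) {α : Type v} (G : SimpleGraph α) : ℝ :=
  sInf {x : ℝ | ∃ n : ℕ, 1 ≤ n ∧ x = (etaF F (disjPow G n) : ℝ) ^ ((1 : ℝ) / n)}

/-- The orthogonal complement of a set of vertices. -/
def perp {α : Type u} (G : SimpleGraph α) (S : Set α) : Set α :=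
  {v | ∀ s ∈ S, G.Adj v s}

/-- A flat is a set of vertices with `S^{⊥⊥} = S`. -/
def IsFlat {α : Type u} (G : SimpleGraph α) (S : Set α) : Prop :=
  perp G (perp G S) = S

/-- Homomorphic equivalence of two graphs. -/
def HomEquiv {α : Type u} {β : Type v} (G : SimpleGraph α) (H : SimpleGraph β) : Prop :=
  Nonempty (G →g H) ∧ Nonempty (H →g G)

/-- A linear-like semiring family: every flat of `F_n` induces a subgraph with some
clique number `k`, homomorphically equivalent to `F_k`. -/
structure LinearLikeFamily extends SemiringFamily where
  linearLike : ∀ n (S : Set (V n)), IsFlat (F n) S →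
    ∃ k : ℕ, (∃ s : Finset S, ((F n).induce S).IsNClique k s) ∧
      (∀ s : Finset S, ¬ ((F n).induce S).IsNClique (k + 1) s) ∧
      HomEquiv ((F n).induce S) (F k)

/-- Blowup and fractionalization are Galois adjoints. -/
theorem blowup_fracGraph_adjunction {α : Type u} {β : Type v}
    (G : SimpleGraph α) (H : SimpleGraph β) (d : ℕ) (hd : 1 ≤ d) :
    Nonempty (blowup G d →g H) ↔ Nonempty (G →g fracGraph H d) := by
  classical
  constructor
  · rintro ⟨f⟩
    refine ⟨⟨fun v => ⟨Finset.image (fun i : Fin d => f (v, i)) Finset.univ, ?_, ?_⟩, ?_⟩⟩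
    · rw [Finset.card_image_of_injective _ ?_, Finset.card_univ, Fintype.card_fin]
      intro i j hij
      by_contra hne
      exact (f.map_adj (Or.inr ⟨rfl, hne⟩ : (blowup G d).Adj (v, i) (v, j))).ne hij
    · intro x hx y hy hxy
      simp only [Finset.coe_image, Set.mem_image, Finset.coe_univ] at hx hy
      obtain ⟨i, -, rfl⟩ := hx
      obtain ⟨j, -, rfl⟩ := hy
      exact f.map_adj (Or.inr ⟨rfl, fun h => hxy (congrArg (fun k => f (v, k)) h)⟩)
    · intro v w hvw
      have hdisj : Disjoint (Finset.image (fun i : Fin d => f (v, i)) Finset.univ)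
          (Finset.image (fun i : Fin d => f (w, i)) Finset.univ) := by
        rw [Finset.disjoint_left]
        intro a ha ha'
        simp only [Finset.mem_image, Finset.mem_univ, true_and] at ha ha'
        obtain ⟨i, rfl⟩ := ha
        obtain ⟨j, hj⟩ := ha'
        exact (f.map_adj (Or.inl hvw : (blowup G d).Adj (v, i) (w, j))).ne hj.symm
      refine ⟨?_, hdisj, ?_⟩
      · intro h
        have h' : (Finset.image (fun i : Fin d => f (v, i)) Finset.univ)
            = Finset.image (fun i : Fin d => f (w, i)) Finset.univ :=
          congrArg Subtype.val h
        rw [h'] at hdisj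
        have hemp : Finset.image (fun i : Fin d => f (w, i)) Finset.univ = ⊥ :=
          disjoint_self.mp hdisj
        have hmem : f (w, ⟨0, hd⟩) ∈ Finset.image (fun i : Fin d => f (w, i)) Finset.univ := by
          simp
        rw [hemp] at hmem
        simp at hmem
      · intro a ha b hb
        simp only [Finset.mem_image, Finset.mem_univ, true_and] at ha hb
        obtain ⟨i, rfl⟩ := ha
        obtain ⟨j, rfl⟩ := hb
        exact f.map_adj (Or.inl hvw)
  · rintro ⟨g⟩
    refine ⟨⟨fun p => ((g p.1).val.equivFin.symm (Fin.cast ((g p.1).2.1).symm p.2) : β), ?_⟩⟩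
    rintro ⟨v, i⟩ ⟨w, j⟩ (h | ⟨h, hij⟩)
    · obtain ⟨hne, hdisj, hadj⟩ := g.map_adj h
      exact hadj _ ((g v).val.equivFin.symm _).2 _ ((g w).val.equivFin.symm _).2
    · subst h
      have hmem1 : (((g v).val.equivFin.symm (Fin.cast ((g v).2.1).symm i)) : β) ∈
          ((g v).val : Set β) := ((g v).val.equivFin.symm _).2
      have hmem2 : (((g v).val.equivFin.symm (Fin.cast ((g v).2.1).symm j)) : β) ∈
          ((g v).val : Set β) := ((g v).val.equivFin.symm _).2
      refine (g v).2.2 hmem1 hmem2 ?_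
      intro hEq
      apply hij
      have := (g v).val.equivFin.symm.injective (Subtype.ext hEq)
      exact Fin.ext (by simpa using congrArg Fin.val this)
end

section
/- Let (F_n) be a linear-like semiring family of graphs and let G and H be finite simple graphs. Then the F-number and the fractional F-number are additive under joins: η_F(G + H) = η_F(G) + η_F(H) and η_F^frac(G + H) = η_F^frac(G) + η_F^frac(H). -/
open SimpleGraph

universe u v

universe w


/-! ### Auxiliary material -/

open scoped Classical

section Aux

variable {V₁ : Type*} {V₂ : Type*} {G₁ : SimpleGraph V₁} {G₂ : SimpleGraph V₂}

lemma aux_isNClique_map (φ : G₁ →g G₂) {n : ℕ} {s : Finset V₁} (h : G₁.IsNClique n s) :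
    G₂.IsNClique n (s.image φ) := by
  obtain ⟨hc, hcard⟩ := h
  constructor
  · rintro x hx y hy hxy
    simp only [Finset.coe_image, Set.mem_image, Finset.mem_coe] at hx hy
    obtain ⟨a, ha, rfl⟩ := hx; obtain ⟨b, hb, rfl⟩ := hy
    have hab : a ≠ b := by rintro rfl; exact hxy rfl
    exact φ.map_adj (hc ha hb hab)
  · rw [Finset.card_image_of_injOn, hcard]
    intro a ha b hb hne
    by_contra hab
    exact (φ.map_adj (hc (by exact_mod_cast ha) (by exact_mod_cast hb) hab)).ne hne

lemma aux_le_of_no_succ_clique {K : ℕ} (hK : ∀ u : Finset V₁, ¬ G₁.IsNClique (K + 1) u)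
    {j : ℕ} {s : Finset V₁} (h : G₁.IsNClique j s) : j ≤ K := by
  by_contra hlt
  push_neg at hlt
  obtain ⟨u, hus, hucard⟩ := Finset.exists_subset_card_eq
    (show K + 1 ≤ s.card by rw [h.2]; omega)
  exact hK u ⟨h.1.subset (by exact_mod_cast Finset.coe_subset.mpr hus), hucard⟩

lemma aux_clique_union {k k' : ℕ} {s s' : Finset V₁} (h : G₁.IsNClique k s)
    (h' : G₁.IsNClique k' s') (hcross : ∀ a ∈ s, ∀ b ∈ s', G₁.Adj a b) :
    G₁.IsNClique (k + k') (s ∪ s') := by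
  have hdisj : Disjoint s s' := by
    rw [Finset.disjoint_left]
    intro a ha ha'
    exact G₁.irrefl (hcross a ha a ha')
  constructor
  · intro x hx y hy hxy
    simp only [Finset.coe_union, Set.mem_union, Finset.mem_coe] at hx hy
    rcases hx with hx | hx <;> rcases hy with hy | hy
    · exact h.1 (by exact_mod_cast hx) (by exact_mod_cast hy) hxy
    · exact hcross x hx y hy
    · exact (hcross y hy x hx).symm
    · exact h'.1 (by exact_mod_cast hx) (by exact_mod_cast hy) hxy
  · rw [Finset.card_union_of_disjoint hdisj, h.2, h'.2]

/-- Lift a finset contained in a set `S` to a finset of the subtype. -/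
def liftFinset {S : Set V₁} (s : Finset V₁) (h : ∀ a ∈ s, a ∈ S) : Finset S :=
  s.attach.map ⟨fun x => ⟨x.1, h x.1 x.2⟩, fun x y hxy => Subtype.ext (Subtype.mk_eq_mk.mp hxy)⟩

@[simp] lemma mem_liftFinset {S : Set V₁} {s : Finset V₁} {h : ∀ a ∈ s, a ∈ S} {a : S} :
    a ∈ liftFinset s h ↔ (a : V₁) ∈ s := by
  simp only [liftFinset, Finset.mem_map, Finset.mem_attach, true_and, Function.Embedding.coeFn_mk]
  constructor
  · rintro ⟨⟨b, hb⟩, rfl⟩; exact hb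
  · intro ha; exact ⟨⟨a, ha⟩, Subtype.ext rfl⟩

@[simp] lemma card_liftFinset {S : Set V₁} {s : Finset V₁} {h : ∀ a ∈ s, a ∈ S} :
    (liftFinset s h).card = s.card := by
  simp [liftFinset]

lemma aux_isNClique_lift {S : Set V₁} {n : ℕ} {s : Finset V₁} (h : G₁.IsNClique n s)
    (hs : ∀ a ∈ s, a ∈ S) : (G₁.induce S).IsNClique n (liftFinset s hs) := by
  constructor
  · intro x hx y hy hxy
    simp only [Finset.mem_coe, mem_liftFinset] at hx hy
    exact h.1 (by exact_mod_cast hx) (by exact_mod_cast hy) (fun he => hxy (Subtype.ext he))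
  · rw [card_liftFinset, h.2]

/-- The homomorphism from an induced subgraph to the ambient graph. -/
def induceValHom (G : SimpleGraph V₁) (S : Set V₁) : G.induce S →g G :=
  ⟨Subtype.val, fun h => h⟩

/-- Restriction of a homomorphism with range in `S` to a map into the induced subgraph. -/
def homIntoInduce (f : G₂ →g G₁) (S : Set V₁) (h : ∀ w, f w ∈ S) : G₂ →g G₁.induce S :=
  ⟨fun w => ⟨f w, h w⟩, fun hadj => f.map_adj hadj⟩

/-! ### Perp/flat facts -/

lemma mem_perp {G : SimpleGraph V₁} {S : Set V₁} {v : V₁} :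
    v ∈ perp G S ↔ ∀ s ∈ S, G.Adj v s := Iff.rfl

lemma subset_perp_perp (G : SimpleGraph V₁) (S : Set V₁) : S ⊆ perp G (perp G S) :=
  fun v hv w hw => (hw v hv).symm

lemma perp_anti (G : SimpleGraph V₁) {S T : Set V₁} (h : S ⊆ T) : perp G T ⊆ perp G S :=
  fun v hv s hs => hv s (h hs)

lemma perp_perp_perp (G : SimpleGraph V₁) (S : Set V₁) :
    perp G (perp G (perp G S)) = perp G S :=
  Set.Subset.antisymm (perp_anti G (subset_perp_perp G S)) (subset_perp_perp G (perp G S))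

lemma isFlat_perp (G : SimpleGraph V₁) (S : Set V₁) : IsFlat G (perp G S) :=
  perp_perp_perp G S

lemma isFlat_univ (G : SimpleGraph V₁) : IsFlat G Set.univ := by
  have h1 : perp G Set.univ = ∅ := by
    ext v
    simp only [Set.mem_empty_iff_false, iff_false]
    intro hv
    exact G.irrefl (hv v (Set.mem_univ v))
  unfold IsFlat
  rw [h1]
  ext v
  simp only [Set.mem_univ, iff_true]
  intro s hs
  exact absurd hs (Set.notMem_empty s)

/-! ### Basic graph homomorphisms -/

/-- The join of two homomorphisms. -/
def joinHomCongr {W₁ W₂ : Type*} {H₁ : SimpleGraph W₁} {H₂ : SimpleGraph W₂}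
    (φ : G₁ →g H₁) (ψ : G₂ →g H₂) : graphJoin G₁ G₂ →g graphJoin H₁ H₂ :=
  ⟨Sum.map φ ψ, by
    rintro (a | b) (a' | b') h
    · exact φ.map_adj h
    · trivial
    · trivial
    · exact ψ.map_adj h⟩

/-- `inl` as graph homomorphism into the join. -/
def joinInlHom {W₁ W₂ : Type*} (H₁ : SimpleGraph W₁) (H₂ : SimpleGraph W₂) :
    H₁ →g graphJoin H₁ H₂ := ⟨Sum.inl, fun h => h⟩

/-- `inr` as graph homomorphism into the join. -/
def joinInrHom {W₁ W₂ : Type*} (H₁ : SimpleGraph W₁) (H₂ : SimpleGraph W₂) :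
    H₂ →g graphJoin H₁ H₂ := ⟨Sum.inr, fun h => h⟩

lemma fracGraph_adj {d : ℕ} {S T : {S : Finset V₁ // S.card = d ∧ G₁.IsClique (S : Set V₁)}} :
    (fracGraph G₁ d).Adj S T ↔
      S ≠ T ∧ Disjoint S.val T.val ∧ ∀ a ∈ S.val, ∀ b ∈ T.val, G₁.Adj a b := Iff.rfl

lemma mk_frac_adj {d : ℕ} (hd : 1 ≤ d)
    {S T : {S : Finset V₁ // S.card = d ∧ G₁.IsClique (S : Set V₁)}}
    (h : ∀ a ∈ S.val, ∀ b ∈ T.val, G₁.Adj a b) : (fracGraph G₁ d).Adj S T := by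
  have hdisj : Disjoint S.val T.val := by
    rw [Finset.disjoint_left]
    intro a ha ha'
    exact G₁.irrefl (h a ha a ha')
  refine ⟨?_, hdisj, h⟩
  intro hST
  obtain ⟨a, ha⟩ := Finset.card_pos.mp (by rw [S.2.1]; omega)
  exact Finset.disjoint_left.mp hdisj ha (hST ▸ ha)

/-- Functoriality of `fracGraph`. -/
noncomputable def fracMap {d : ℕ} (hd : 1 ≤ d) (φ : G₁ →g G₂) : fracGraph G₁ d →g fracGraph G₂ d where
  toFun S := ⟨S.val.image φ, (aux_isNClique_map φ ⟨S.2.2, S.2.1⟩).2,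
    (aux_isNClique_map φ ⟨S.2.2, S.2.1⟩).1⟩
  map_rel' := by
    intro S T hST
    refine mk_frac_adj hd ?_
    intro a ha b hb
    simp only [Finset.mem_image] at ha hb
    obtain ⟨x, hx, rfl⟩ := ha
    obtain ⟨y, hy, rfl⟩ := hb
    exact φ.map_adj (hST.2.2 x hx y hy)

lemma fracMap_val {d : ℕ} (hd : 1 ≤ d) (φ : G₁ →g G₂)
    (S : {S : Finset V₁ // S.card = d ∧ G₁.IsClique (S : Set V₁)}) :
    (fracMap hd φ S).val = S.val.image φ := rfl

/-- Every graph maps into its `1`-fractionalization. -/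
def toFrac1 (G : SimpleGraph V₁) : G →g fracGraph G 1 where
  toFun v := ⟨{v}, Finset.card_singleton v, by simp [SimpleGraph.isClique_iff]⟩
  map_rel' := by
    intro a b hab
    refine mk_frac_adj le_rfl ?_
    intro x hx y hy
    simp only [Finset.mem_singleton] at hx hy
    subst hx; subst hy
    exact hab

/-- The `1`-fractionalization maps back to the graph. -/
noncomputable def ofFrac1 (G : SimpleGraph V₁) : fracGraph G 1 →g G where
  toFun S := (Finset.card_eq_one.mp S.2.1).choose
  map_rel' := by
    intro S T h
    have hS := (Finset.card_eq_one.mp S.2.1).choose_spec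
    have hT := (Finset.card_eq_one.mp T.2.1).choose_spec
    exact h.2.2 _ (Finset.eq_singleton_iff_unique_mem.mp hS).1 _ (Finset.eq_singleton_iff_unique_mem.mp hT).1

lemma aux_isNClique_prod {s : Finset V₁} {t : Finset V₂} {a b : ℕ}
    (hs : G₁.IsNClique a s) (ht : G₂.IsNClique b t) :
    (disjProd G₁ G₂).IsNClique (a * b) (s ×ˢ t) := by
  constructor
  · rintro ⟨x1, x2⟩ hx ⟨y1, y2⟩ hy hxy
    simp only [Finset.coe_product, Set.mem_prod] at hx hy
    by_cases h1 : x1 = y1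
    · subst h1
      have h2 : x2 ≠ y2 := fun h => hxy (by rw [h])
      exact Or.inr (ht.1 (by exact_mod_cast hx.2) (by exact_mod_cast hy.2) h2)
    · exact Or.inl (hs.1 (by exact_mod_cast hx.1) (by exact_mod_cast hy.1) h1)
  · rw [Finset.card_product, hs.2, ht.2]

end Aux

section Family

/-- `K_m → F_m`. -/
lemma homTop (F : SemiringFamily.{u}) : ∀ m : ℕ, Nonempty ((⊤ : SimpleGraph (Fin m)) →g F.F m)
  | 0 => ⟨⟨fun i => i.elim0, fun {a} _ _ => a.elim0⟩⟩
  | (m + 1) => by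
    obtain ⟨h⟩ := homTop F m
    obtain ⟨v₁⟩ := F.nonempty_one
    obtain ⟨j⟩ := F.add_hom m 1
    refine ⟨⟨fun i => if hi : (i : ℕ) < m then j (Sum.inl (h ⟨i, hi⟩)) else j (Sum.inr v₁), ?_⟩⟩
    intro a b hab
    rw [SimpleGraph.top_adj] at hab
    by_cases ha : (a : ℕ) < m <;> by_cases hb : (b : ℕ) < m <;>
      simp only [ha, hb, dif_pos, dif_neg, not_false_iff]
    · refine j.map_adj (show (graphJoin (F.F m) (F.F 1)).Adj (Sum.inl _) (Sum.inl _) from ?_)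
      refine h.map_adj ?_
      rw [SimpleGraph.top_adj]
      intro he
      apply hab
      have h2 : (a : ℕ) = (b : ℕ) := by injection he
      exact Fin.ext h2
    · exact j.map_adj (show (graphJoin (F.F m) (F.F 1)).Adj (Sum.inl _) (Sum.inr _) from trivial)
    · exact j.map_adj (show (graphJoin (F.F m) (F.F 1)).Adj (Sum.inr _) (Sum.inl _) from trivial)
    · exfalso
      apply hab
      have ha' : (a : ℕ) = m := by omega
      have hb' : (b : ℕ) = m := by omega
      exact Fin.ext (ha'.trans hb'.symm)

lemma isNClique_univ_top (m : ℕ) :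
    (⊤ : SimpleGraph (Fin m)).IsNClique m Finset.univ := by
  constructor
  · intro x _ y _ hxy
    exact hxy
  · simp

lemma exists_self_clique (F : SemiringFamily.{u}) (m : ℕ) :
    ∃ s : Finset (F.V m), (F.F m).IsNClique m s := by
  obtain ⟨φ⟩ := homTop F m
  exact ⟨_, aux_isNClique_map φ (isNClique_univ_top m)⟩

lemma homToTopCard {α : Type*} (G : SimpleGraph α) [Fintype α] :
    Nonempty (G →g (⊤ : SimpleGraph (Fin (Fintype.card α)))) :=
  ⟨⟨Fintype.equivFin α, fun {a b} h => by
    rw [SimpleGraph.top_adj]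
    exact fun he => h.ne ((Fintype.equivFin α).injective he)⟩⟩

lemma hom_to_family {α : Type*} (G : SimpleGraph α) [Fintype α] (F : SemiringFamily.{u}) :
    Nonempty (G →g F.F (Fintype.card α)) := by
  obtain ⟨φ⟩ := homToTopCard G
  obtain ⟨ψ⟩ := homTop F (Fintype.card α)
  exact ⟨ψ.comp φ⟩

/-- The scaling homomorphism `F_n/d → F_{nc}/(dc)`. -/
lemma fracScale (F : SemiringFamily.{u}) (n c d : ℕ) (hd : 1 ≤ d) (hc : 1 ≤ c) :
    Nonempty (fracGraph (F.F n) d →g fracGraph (F.F (n * c)) (d * c)) := by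
  obtain ⟨C, hC⟩ := exists_self_clique F c
  obtain ⟨φ⟩ := F.mul_hom n c
  have key : ∀ S : {S : Finset (F.V n) // S.card = d ∧ (F.F n).IsClique (S : Set (F.V n))},
      (F.F (n * c)).IsNClique (d * c) ((S.val ×ˢ C).image φ) :=
    fun S => aux_isNClique_map φ (aux_isNClique_prod ⟨S.2.2, S.2.1⟩ hC)
  refine ⟨⟨fun S => ⟨(S.val ×ˢ C).image φ, (key S).2, (key S).1⟩, ?_⟩⟩
  intro S T hST
  refine mk_frac_adj (Nat.one_le_iff_ne_zero.mpr (by positivity)) ?_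
  intro a ha b hb
  simp only [Finset.mem_image, Finset.mem_product] at ha hb
  obtain ⟨⟨x1, x2⟩, ⟨hx1, _⟩, rfl⟩ := ha
  obtain ⟨⟨y1, y2⟩, ⟨hy1, _⟩, rfl⟩ := hb
  exact φ.map_adj (Or.inl (hST.2.2 x1 hx1 y1 hy1))

/-- The join homomorphism at the fractional level. -/
lemma fracJoin (F : SemiringFamily.{u}) (n m d : ℕ) (hd : 1 ≤ d) :
    Nonempty (graphJoin (fracGraph (F.F n) d) (fracGraph (F.F m) d)
      →g fracGraph (F.F (n + m)) d) := by
  obtain ⟨ψ⟩ := F.add_hom n m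
  refine ⟨⟨Sum.elim (fracMap hd (ψ.comp (joinInlHom (F.F n) (F.F m)))) (fracMap hd (ψ.comp (joinInrHom (F.F n) (F.F m)))), ?_⟩⟩
  rintro (S | S) (T | T) hST
  · exact (fracMap hd (ψ.comp (joinInlHom (F.F n) (F.F m)))).map_adj hST
  · refine mk_frac_adj hd ?_
    intro a ha b hb
    rw [Sum.elim_inl, fracMap_val] at ha
    rw [Sum.elim_inr, fracMap_val] at hb
    simp only [Finset.mem_image] at ha hb
    obtain ⟨x, hx, rfl⟩ := ha
    obtain ⟨y, hy, rfl⟩ := hb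
    exact ψ.map_adj (show (graphJoin (F.F n) (F.F m)).Adj (Sum.inl x) (Sum.inr y) from trivial)
  · refine mk_frac_adj hd ?_
    intro a ha b hb
    rw [Sum.elim_inr, fracMap_val] at ha
    rw [Sum.elim_inl, fracMap_val] at hb
    simp only [Finset.mem_image] at ha hb
    obtain ⟨x, hx, rfl⟩ := ha
    obtain ⟨y, hy, rfl⟩ := hb
    exact ψ.map_adj (show (graphJoin (F.F n) (F.F m)).Adj (Sum.inr x) (Sum.inl y) from trivial)
  · exact (fracMap hd (ψ.comp (joinInrHom (F.F n) (F.F m)))).map_adj hST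

/-! ### The clique bound -/

/-- In a linear-like family, cliques of `F_t` have at most `t` vertices. -/
lemma clique_bound (F : LinearLikeFamily.{u}) (t : ℕ) {j : ℕ} {s : Finset (F.V t)}
    (hs : (F.toSemiringFamily.F t).IsNClique j s) : j ≤ t := by
  classical
  -- full flat of F_t
  obtain ⟨m, ⟨c₀, hc₀⟩, hmax₀, ⟨⟨e₁⟩, ⟨e₂⟩⟩⟩ := F.linearLike t Set.univ (isFlat_univ _)
  have toUniv : F.toSemiringFamily.F t →g (F.toSemiringFamily.F t).induce Set.univ :=
    homIntoInduce ⟨id, fun h => h⟩ Set.univ (fun _ => Set.mem_univ _)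
  -- cliques of F_m are bounded by m
  have hBm : ∀ (j' : ℕ) (u : Finset (F.V m)),
      (F.toSemiringFamily.F m).IsNClique j' u → j' ≤ m := by
    intro j' u hu
    exact aux_le_of_no_succ_clique hmax₀ (aux_isNClique_map e₂ hu)
  -- t ≤ m
  obtain ⟨ct, hct⟩ := exists_self_clique F.toSemiringFamily t
  have htm : t ≤ m := hBm t _ (aux_isNClique_map (e₁.comp toUniv) hct)
  -- an m-clique c in F_m
  obtain ⟨c, hc⟩ := exists_self_clique F.toSemiringFamily m
  obtain ⟨T, hTc, hTcard⟩ := Finset.exists_subset_card_eq (show t ≤ c.card by rw [hc.2]; exact htm)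
  set Gm := F.toSemiringFamily.F m with hGm
  set S' : Set (F.V m) := perp Gm (↑T) with hS'
  set S : Set (F.V m) := perp Gm S' with hSdef
  obtain ⟨k, ⟨u, hu⟩, hmaxS, ⟨⟨g₁⟩, ⟨g₂⟩⟩⟩ := F.linearLike m S (isFlat_perp _ _)
  obtain ⟨k', ⟨u', hu'⟩, hmaxS', ⟨⟨g₁'⟩, ⟨g₂'⟩⟩⟩ := F.linearLike m S' (isFlat_perp _ _)
  -- T ⊆ S
  have hTS : ∀ a ∈ T, a ∈ S := fun a ha => subset_perp_perp Gm (↑T) (by exact_mod_cast ha)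
  -- t ≤ k
  have hTclique : Gm.IsNClique t T :=
    ⟨hc.1.subset (by exact_mod_cast Finset.coe_subset.mpr hTc), hTcard⟩
  have htk : t ≤ k := aux_le_of_no_succ_clique hmaxS (aux_isNClique_lift hTclique hTS)
  -- c \ T ⊆ S'
  have hcTS' : ∀ a ∈ c \ T, a ∈ S' := by
    intro a ha x hx
    rw [Finset.mem_sdiff] at ha
    have hxT : x ∈ T := by exact_mod_cast hx
    have hax : a ≠ x := fun he => ha.2 (he ▸ hxT)
    exact hc.1 (by exact_mod_cast ha.1) (by exact_mod_cast hTc hxT) hax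
  have hcT : Gm.IsNClique (m - t) (c \ T) := by
    refine ⟨hc.1.subset ?_, ?_⟩
    · exact_mod_cast Finset.coe_subset.mpr (Finset.sdiff_subset)
    · rw [Finset.card_sdiff_of_subset hTc, hc.2, hTcard]
  have hmtk' : m - t ≤ k' := aux_le_of_no_succ_clique hmaxS' (aux_isNClique_lift hcT hcTS')
  -- k + k' ≤ m
  have hkk' : k + k' ≤ m := by
    have huv := aux_isNClique_map (induceValHom Gm S) hu
    have huv' := aux_isNClique_map (induceValHom Gm S') hu'
    have hcross : ∀ a ∈ u.image Subtype.val, ∀ b ∈ u'.image Subtype.val, Gm.Adj a b := by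
      intro a ha b hb
      simp only [Finset.mem_image] at ha hb
      obtain ⟨⟨a, haS⟩, _, rfl⟩ := ha
      obtain ⟨⟨b, hbS'⟩, _, rfl⟩ := hb
      exact haS b hbS'
    exact hBm _ _ (aux_clique_union huv huv' hcross)
  have hkt : k = t := by omega
  subst hkt
  exact aux_le_of_no_succ_clique hmaxS (aux_isNClique_map g₂ hs)

/-- The fractional splitting lemma: a homomorphism from a join into `F_N/d` splits. -/
lemma frac_split (F : LinearLikeFamily.{u}) {α β : Type*} (G : SimpleGraph α)
    (H : SimpleGraph β) (N d : ℕ) (hd : 1 ≤ d)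
    (f : graphJoin G H →g fracGraph (F.toSemiringFamily.F N) d) :
    ∃ k k', k + k' ≤ N ∧ Nonempty (H →g fracGraph (F.toSemiringFamily.F k) d) ∧
      Nonempty (G →g fracGraph (F.toSemiringFamily.F k') d) := by
  classical
  set GN := F.toSemiringFamily.F N with hGN
  set T₀ : Set (F.V N) := {v | ∃ b, v ∈ (f (Sum.inr b)).val} with hT₀
  set S' : Set (F.V N) := perp GN T₀ with hS'
  set S : Set (F.V N) := perp GN S' with hSdef
  have hH : ∀ b, ∀ x ∈ (f (Sum.inr b)).val, x ∈ S := by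
    intro b x hx y hy
    exact (hy x ⟨b, hx⟩).symm
  have hG : ∀ a, ∀ x ∈ (f (Sum.inl a)).val, x ∈ S' := by
    intro a x hx y hy
    obtain ⟨b, hb⟩ := hy
    have hadj := f.map_adj (show (graphJoin G H).Adj (Sum.inl a) (Sum.inr b) from trivial)
    exact hadj.2.2 x hx y hb
  obtain ⟨k, ⟨u, hu⟩, hmaxS, ⟨⟨g₁⟩, _⟩⟩ := F.linearLike N S (isFlat_perp _ _)
  obtain ⟨k', ⟨u', hu'⟩, hmaxS', ⟨⟨g₁'⟩, _⟩⟩ := F.linearLike N S' (isFlat_perp _ _)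
  refine ⟨k, k', ?_, ?_, ?_⟩
  · -- k + k' ≤ N
    have huv := aux_isNClique_map (induceValHom GN S) hu
    have huv' := aux_isNClique_map (induceValHom GN S') hu'
    have hcross : ∀ a ∈ u.image Subtype.val, ∀ b ∈ u'.image Subtype.val, GN.Adj a b := by
      intro a ha b hb
      simp only [Finset.mem_image] at ha hb
      obtain ⟨⟨a, haS⟩, _, rfl⟩ := ha
      obtain ⟨⟨b, hbS'⟩, _, rfl⟩ := hb
      exact haS b hbS'
    exact clique_bound F N (aux_clique_union huv huv' hcross)
  · -- H →g F_k/d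
    have hHind : H →g fracGraph (GN.induce S) d := by
      refine ⟨fun b =>
        ⟨liftFinset (f (Sum.inr b)).val (hH b),
          (aux_isNClique_lift ⟨(f (Sum.inr b)).2.2, (f (Sum.inr b)).2.1⟩ (hH b)).2,
          (aux_isNClique_lift ⟨(f (Sum.inr b)).2.2, (f (Sum.inr b)).2.1⟩ (hH b)).1⟩, ?_⟩
      intro b b' hbb
      have hadj := f.map_adj (show (graphJoin G H).Adj (Sum.inr b) (Sum.inr b') from hbb)
      refine mk_frac_adj hd ?_
      intro x hx y hy
      rw [mem_liftFinset] at hx hy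
      exact hadj.2.2 x hx y hy
    exact ⟨(fracMap hd g₁).comp hHind⟩
  · -- G →g F_{k'}/d
    have hGind : G →g fracGraph (GN.induce S') d := by
      refine ⟨fun a =>
        ⟨liftFinset (f (Sum.inl a)).val (hG a),
          (aux_isNClique_lift ⟨(f (Sum.inl a)).2.2, (f (Sum.inl a)).2.1⟩ (hG a)).2,
          (aux_isNClique_lift ⟨(f (Sum.inl a)).2.2, (f (Sum.inl a)).2.1⟩ (hG a)).1⟩, ?_⟩
      intro a a' haa
      have hadj := f.map_adj (show (graphJoin G H).Adj (Sum.inl a) (Sum.inl a') from haa)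
      refine mk_frac_adj hd ?_
      intro x hx y hy
      rw [mem_liftFinset] at hx hy
      exact hadj.2.2 x hx y hy
    exact ⟨(fracMap hd g₁').comp hGind⟩

end Family


section EtaFrac

variable {α : Type*}

lemma etaFracSet_bddBelow (F : SemiringFamily.{u}) (G : SimpleGraph α) :
    BddBelow {x : ℝ | ∃ n d : ℕ, 1 ≤ d ∧ Nonempty (G →g fracGraph (F.F n) d) ∧ x = (n : ℝ) / d} := by
  refine ⟨0, ?_⟩
  rintro x ⟨n, d, hd, -, rfl⟩
  positivity

lemma etaFracSet_nonempty (F : SemiringFamily.{u}) (G : SimpleGraph α) [Fintype α] :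
    {x : ℝ | ∃ n d : ℕ, 1 ≤ d ∧ Nonempty (G →g fracGraph (F.F n) d) ∧ x = (n : ℝ) / d}.Nonempty := by
  obtain ⟨φ⟩ := hom_to_family G F
  exact ⟨_, Fintype.card α, 1, le_rfl, ⟨(toFrac1 _).comp φ⟩, rfl⟩

lemma etaFrac_le (F : SemiringFamily.{u}) (G : SimpleGraph α) {n d : ℕ} (hd : 1 ≤ d)
    (h : Nonempty (G →g fracGraph (F.F n) d)) : etaFrac F G ≤ (n : ℝ) / d :=
  csInf_le (etaFracSet_bddBelow F G) ⟨n, d, hd, h, rfl⟩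

lemma le_etaFrac (F : SemiringFamily.{u}) (G : SimpleGraph α) [Fintype α] {c : ℝ}
    (h : ∀ n d : ℕ, 1 ≤ d → Nonempty (G →g fracGraph (F.F n) d) → c ≤ (n : ℝ) / d) :
    c ≤ etaFrac F G := by
  refine le_csInf (etaFracSet_nonempty F G) ?_
  rintro x ⟨n, d, hd, hn, rfl⟩
  exact h n d hd hn

end EtaFrac

/-- For a linear-like semiring family, the `F`-number and the fractional `F`-number
are additive under joins. -/
theorem linearLike_eta_additive (F : LinearLikeFamily.{u}) {α : Type v} {β : Type w}
    [Fintype α] [Fintype β] (G : SimpleGraph α) (H : SimpleGraph β) :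
    etaF F.toSemiringFamily (graphJoin G H)
        = etaF F.toSemiringFamily G + etaF F.toSemiringFamily H ∧
      etaFrac F.toSemiringFamily (graphJoin G H)
        = etaFrac F.toSemiringFamily G + etaFrac F.toSemiringFamily H := by
  set SF := F.toSemiringFamily with hSF
  constructor
  · -- the integral part
    obtain ⟨φG⟩ : Nonempty (G →g SF.F (etaF SF G)) :=
      Nat.sInf_mem (⟨_, hom_to_family G SF⟩ : {n : ℕ | Nonempty (G →g SF.F n)}.Nonempty)
    obtain ⟨φH⟩ : Nonempty (H →g SF.F (etaF SF H)) :=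
      Nat.sInf_mem (⟨_, hom_to_family H SF⟩ : {n : ℕ | Nonempty (H →g SF.F n)}.Nonempty)
    obtain ⟨f⟩ : Nonempty (graphJoin G H →g SF.F (etaF SF (graphJoin G H))) :=
      Nat.sInf_mem (⟨_, hom_to_family (graphJoin G H) SF⟩ :
        {n : ℕ | Nonempty (graphJoin G H →g SF.F n)}.Nonempty)
    obtain ⟨j⟩ := SF.add_hom (etaF SF G) (etaF SF H)
    have hle : etaF SF (graphJoin G H) ≤ etaF SF G + etaF SF H :=
      Nat.sInf_le ⟨j.comp (joinHomCongr φG φH)⟩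
    obtain ⟨k, k', hkk, ⟨hHk⟩, ⟨hGk'⟩⟩ :=
      frac_split F G H (etaF SF (graphJoin G H)) 1 le_rfl ((toFrac1 _).comp f)
    have h1 : etaF SF H ≤ k := Nat.sInf_le ⟨(ofFrac1 _).comp hHk⟩
    have h2 : etaF SF G ≤ k' := Nat.sInf_le ⟨(ofFrac1 _).comp hGk'⟩
    omega
  · -- the fractional part
    have h1 : ∀ n d : ℕ, 1 ≤ d → Nonempty (G →g fracGraph (SF.F n) d) →
        ∀ m e : ℕ, 1 ≤ e → Nonempty (H →g fracGraph (SF.F m) e) →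
        etaFrac SF (graphJoin G H) ≤ (n : ℝ) / d + (m : ℝ) / e := by
      rintro n d hd ⟨φ⟩ m e he ⟨ψ⟩
      obtain ⟨σ₁⟩ := fracScale SF n e d hd he
      obtain ⟨σ₂⟩ := fracScale SF m d e he hd
      have σ₂' : fracGraph (SF.F m) e →g fracGraph (SF.F (m * d)) (d * e) := by
        rw [Nat.mul_comm d e]; exact σ₂
      have hde : 1 ≤ d * e := Nat.one_le_iff_ne_zero.mpr (by positivity)
      obtain ⟨j⟩ := fracJoin SF (n * e) (m * d) (d * e) hde
      have hom : graphJoin G H →g fracGraph (SF.F (n * e + m * d)) (d * e) :=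
        j.comp (joinHomCongr (σ₁.comp φ) (σ₂'.comp ψ))
      have hd0 : (0 : ℝ) < d := by exact_mod_cast hd
      have he0 : (0 : ℝ) < e := by exact_mod_cast he
      calc etaFrac SF (graphJoin G H) ≤ ((n * e + m * d : ℕ) : ℝ) / ((d * e : ℕ) : ℝ) :=
            etaFrac_le SF (graphJoin G H) hde ⟨hom⟩
        _ = (n : ℝ) / d + (m : ℝ) / e := by push_cast; field_simp
    have hle : etaFrac SF (graphJoin G H) ≤ etaFrac SF G + etaFrac SF H := by
      have step : ∀ n d : ℕ, 1 ≤ d → Nonempty (G →g fracGraph (SF.F n) d) →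
          etaFrac SF (graphJoin G H) - (n : ℝ) / d ≤ etaFrac SF H := by
        intro n d hd hφ
        refine le_etaFrac SF H ?_
        intro m e he hψ
        linarith [h1 n d hd hφ m e he hψ]
      have step2 : etaFrac SF (graphJoin G H) - etaFrac SF H ≤ etaFrac SF G := by
        refine le_etaFrac SF G ?_
        intro n d hd hφ
        linarith [step n d hd hφ]
      linarith
    have hge : etaFrac SF G + etaFrac SF H ≤ etaFrac SF (graphJoin G H) := by
      refine le_etaFrac SF (graphJoin G H) ?_
      rintro N d hd ⟨f⟩
      obtain ⟨k, k', hkk, ⟨hHk⟩, ⟨hGk'⟩⟩ := frac_split F G H N d hd f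
      have hA : etaFrac SF G ≤ (k' : ℝ) / d := etaFrac_le SF G hd ⟨hGk'⟩
      have hB : etaFrac SF H ≤ (k : ℝ) / d := etaFrac_le SF H hd ⟨hHk⟩
      have hd0 : (0 : ℝ) < d := by exact_mod_cast hd
      have hsum : (k' : ℝ) + k ≤ N := by exact_mod_cast by omega
      calc etaFrac SF G + etaFrac SF H ≤ (k' : ℝ) / d + (k : ℝ) / d := add_le_add hA hB
        _ = ((k' : ℝ) + k) / d := by ring
        _ ≤ (N : ℝ) / d := by
            apply div_le_div_of_nonneg_right hsum hd0.le
    linarith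
end

section
/- Let (F_n) be a linear-like semiring family of graphs and let G and H be finite simple graphs. Then the fractional F-number is multiplicative both on lexicographic products and on disjunctive products: η_F^frac(G ⋉ H) = η_F^frac(G) · η_F^frac(H) and η_F^frac(G * H) = η_F^frac(G) · η_F^frac(H). -/
open SimpleGraph

universe u v

section LLFHelpers

variable {α' : Type*} {β' : Type*} {γ' : Type*}

lemma LLF_homBuild {G : SimpleGraph α'} {K : SimpleGraph γ'} {d : ℕ} (hd : 1 ≤ d)
    (C : α' → Finset γ') (hcard : ∀ a, (C a).card = d)
    (hclique : ∀ a, K.IsClique (C a : Set γ'))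
    (hfull : ∀ a b, G.Adj a b → ∀ x ∈ C a, ∀ y ∈ C b, K.Adj x y) :
    Nonempty (G →g fracGraph K d) := by
  refine ⟨⟨fun a => ⟨C a, hcard a, hclique a⟩, ?_⟩⟩
  intro a b hab
  have hdisj : Disjoint (C a) (C b) := by
    rw [Finset.disjoint_left]
    intro x hxa hxb
    exact K.loopless.irrefl x (hfull a b hab x hxa x hxb)
  refine ⟨?_, hdisj, hfull a b hab⟩
  intro heq
  have hval : C a = C b := congrArg Subtype.val heq
  obtain ⟨x, hx⟩ := Finset.card_pos.mp (by rw [hcard a]; exact hd)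
  exact K.loopless.irrefl x (hfull a b hab x hx x (hval ▸ hx))

lemma LLF_injOn_of_clique {G : SimpleGraph α'} {K : SimpleGraph γ'} (f : G →g K)
    {s : Finset α'} (hs : G.IsClique (s : Set α')) : Set.InjOn f (s : Set α') := by
  intro x hx y hy hxy
  by_contra hne
  exact K.loopless.irrefl (f x) (by nth_rewrite 2 [hxy]; exact f.map_rel (hs hx hy hne))

lemma LLF_isClique_image {G : SimpleGraph α'} {K : SimpleGraph γ'} (f : G →g K)
    {s : Finset α'} (hs : G.IsClique (s : Set α')) [DecidableEq γ'] :
    K.IsClique ((s.image f : Finset γ') : Set γ') := by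
  intro u hu v hv huv
  rw [Finset.coe_image] at hu hv
  obtain ⟨x, hx, rfl⟩ := hu
  obtain ⟨y, hy, rfl⟩ := hv
  exact f.map_rel (hs hx hy (fun h => huv (by rw [h])))

lemma LLF_fracHom {G : SimpleGraph α'} {K : SimpleGraph γ'} (f : G →g K) (d : ℕ) :
    Nonempty (fracGraph G d →g fracGraph K d) := by
  classical
  refine ⟨⟨fun S => ⟨S.1.image f, by
      rw [Finset.card_image_of_injOn (LLF_injOn_of_clique f S.2.2)]; exact S.2.1,
    LLF_isClique_image f S.2.2⟩, ?_⟩⟩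
  rintro S T ⟨hne, hdisj, hfull⟩
  have hfull' : ∀ x ∈ S.1.image f, ∀ y ∈ T.1.image f, K.Adj x y := by
    intro x hx y hy
    obtain ⟨a, ha, rfl⟩ := Finset.mem_image.mp hx
    obtain ⟨b, hb, rfl⟩ := Finset.mem_image.mp hy
    exact f.map_rel (hfull a ha b hb)
  have hdisj' : Disjoint (S.1.image f) (T.1.image f) := by
    rw [Finset.disjoint_left]
    intro x hx hy
    exact K.loopless.irrefl x (hfull' x hx x hy)
  refine ⟨?_, hdisj', hfull'⟩
  intro heq
  have hval : S.1.image f = T.1.image f := congrArg Subtype.val heq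
  have hemp : S.1.image f = ∅ := by
    have h2 : Disjoint (S.1.image f) (S.1.image f) := by rw [hval] at hdisj' ⊢; exact hdisj'
    simpa using disjoint_self.mp h2
  have hS : S.1 = ∅ := Finset.image_eq_empty.mp hemp
  have hT : T.1 = ∅ := Finset.image_eq_empty.mp (by rw [← hval]; exact hemp)
  exact hne (Subtype.ext (hS.trans hT.symm))

/-! ### perp lemmas -/

lemma LLF_perp_anti (G : SimpleGraph γ') {S T : Set γ'} (h : S ⊆ T) :
    perp G T ⊆ perp G S := fun v hv s hs => hv s (h hs)

lemma LLF_subset_perp_perp (G : SimpleGraph γ') (S : Set γ') :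
    S ⊆ perp G (perp G S) := fun v hv s hs => (hs v hv).symm

lemma LLF_perp_perp_perp (G : SimpleGraph γ') (S : Set γ') :
    perp G (perp G (perp G S)) = perp G S :=
  Set.Subset.antisymm (LLF_perp_anti G (LLF_subset_perp_perp G S))
    (LLF_subset_perp_perp G (perp G S))

lemma LLF_isFlat_perp_perp (G : SimpleGraph γ') (S : Set γ') :
    IsFlat G (perp G (perp G S)) :=
  LLF_perp_perp_perp G (perp G S)

/-! ### finsets inside a set of vertices -/

def LLF_subFinset {S : Set γ'} (C : Finset γ') (h : (C : Set γ') ⊆ S) : Finset S :=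
  C.attach.map ⟨fun x => ⟨x.1, h x.2⟩, by
    intro a b hab
    have hv : (a : γ') = (b : γ') := congrArg (Subtype.val : S → γ') hab
    exact Subtype.ext hv⟩

lemma LLF_mem_subFinset {S : Set γ'} {C : Finset γ'} (h : (C : Set γ') ⊆ S) (y : S) :
    y ∈ LLF_subFinset C h ↔ (y : γ') ∈ C := by
  simp only [LLF_subFinset, Finset.mem_map, Finset.mem_attach, Function.Embedding.coeFn_mk,
    true_and, Subtype.ext_iff]
  constructor
  · rintro ⟨a, ha⟩
    rw [← ha]; exact a.2
  · intro hy; exact ⟨⟨y, hy⟩, rfl⟩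

lemma LLF_card_subFinset {S : Set γ'} (C : Finset γ') (h : (C : Set γ') ⊆ S) :
    (LLF_subFinset C h).card = C.card := by
  simp [LLF_subFinset]

/-! ### the defining set of `etaFrac` -/

def LLF_Aset (F : SemiringFamily.{u}) {α' : Type*} (G : SimpleGraph α') : Set ℝ :=
  {x | ∃ n d : ℕ, 1 ≤ d ∧ Nonempty (G →g fracGraph (F.F n) d) ∧ x = (n : ℝ) / d}

lemma LLF_etaFrac_eq (F : SemiringFamily.{u}) {α' : Type*} (G : SimpleGraph α') :
    etaFrac F G = sInf (LLF_Aset F G) := rfl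

lemma LLF_Aset_nonneg (F : SemiringFamily.{u}) {α' : Type*} (G : SimpleGraph α') :
    ∀ x ∈ LLF_Aset F G, (0 : ℝ) ≤ x := by
  rintro x ⟨n, d, hd, _, rfl⟩
  positivity

lemma LLF_Aset_bddBelow (F : SemiringFamily.{u}) {α' : Type*} (G : SimpleGraph α') :
    BddBelow (LLF_Aset F G) :=
  ⟨0, fun x hx => LLF_Aset_nonneg F G x hx⟩

lemma LLF_etaFrac_le (F : SemiringFamily.{u}) {α' : Type*} (G : SimpleGraph α')
    {x : ℝ} (hx : x ∈ LLF_Aset F G) : etaFrac F G ≤ x :=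
  csInf_le (LLF_Aset_bddBelow F G) hx

lemma LLF_etaFrac_nonneg (F : SemiringFamily.{u}) {α' : Type*} (G : SimpleGraph α') :
    0 ≤ etaFrac F G :=
  Real.sInf_nonneg (LLF_Aset_nonneg F G)

lemma LLF_topHom (F : SemiringFamily.{u}) (N : ℕ) :
    Nonempty ((⊤ : SimpleGraph (Fin N)) →g F.F N) := by
  induction N with
  | zero => exact ⟨⟨Fin.elim0, fun {a b} _ => a.elim0⟩⟩
  | succ N ih =>
    obtain ⟨f⟩ := ih
    obtain ⟨j⟩ := F.add_hom N 1
    obtain ⟨v0⟩ := F.nonempty_one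
    refine ⟨⟨fun i => j (if h : (i : ℕ) < N then Sum.inl (f ⟨i, h⟩) else Sum.inr v0), ?_⟩⟩
    intro a b hab
    have hab' : a ≠ b := hab.ne
    apply j.map_rel
    by_cases ha : (a : ℕ) < N <;> by_cases hb : (b : ℕ) < N
    · rw [dif_pos ha, dif_pos hb]
      show (F.F N).Adj _ _
      exact f.map_rel (by
        show (⟨(a : ℕ), ha⟩ : Fin N) ≠ ⟨(b : ℕ), hb⟩
        intro h
        have hval : (a : ℕ) = (b : ℕ) := congrArg (Fin.val : Fin N → ℕ) h
        exact hab' (Fin.ext hval))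
    · rw [dif_pos ha, dif_neg hb]
      show True
      trivial
    · rw [dif_neg ha, dif_pos hb]
      show True
      trivial
    · exfalso
      have h1 : (a : ℕ) = N := Nat.le_antisymm (Nat.lt_succ_iff.mp a.2) (Nat.not_lt.mp ha)
      have h2 : (b : ℕ) = N := Nat.le_antisymm (Nat.lt_succ_iff.mp b.2) (Nat.not_lt.mp hb)
      exact hab' (Fin.ext (h1.trans h2.symm))

lemma LLF_Aset_nonempty (F : SemiringFamily.{u}) {α' : Type*} [Fintype α'] (G : SimpleGraph α') :
    (LLF_Aset F G).Nonempty := by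
  classical
  obtain ⟨κ⟩ := LLF_topHom F (Fintype.card α')
  have hhom : Nonempty (G →g fracGraph (F.F (Fintype.card α')) 1) := by
    apply LLF_homBuild le_rfl (fun a => {κ (Fintype.equivFin α' a)})
    · intro a; simp
    · intro a
      simp only [Finset.coe_singleton]
      exact Set.pairwise_singleton _ _
    · intro a b hab x hx y hy
      rw [Finset.mem_singleton] at hx hy
      subst hx; subst hy
      apply κ.map_rel
      show (Fintype.equivFin α') a ≠ (Fintype.equivFin α') b
      exact fun h => G.ne_of_adj hab ((Fintype.equivFin α').injective h)
  exact ⟨(Fintype.card α' : ℝ) / 1, Fintype.card α', 1, le_rfl, hhom, by norm_num⟩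

lemma LLF_etaFrac_eq_zero (F : SemiringFamily.{u}) {α' : Type*} [IsEmpty α']
    (G : SimpleGraph α') : etaFrac F G = 0 := by
  have h0 : (0 : ℝ) ∈ LLF_Aset F G :=
    ⟨0, 1, le_rfl, ⟨⟨fun a => isEmptyElim a, fun {a b} _ => isEmptyElim a⟩⟩, by norm_num⟩
  exact le_antisymm (LLF_etaFrac_le F G h0) (LLF_etaFrac_nonneg F G)

lemma LLF_sInf_mul_le {A B C : Set ℝ} (hA : A.Nonempty) (hB : B.Nonempty)
    (hA0 : ∀ x ∈ A, 0 ≤ x) (hB0 : ∀ y ∈ B, 0 ≤ y) (hC : BddBelow C)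
    (h : ∀ x ∈ A, ∀ y ∈ B, x * y ∈ C) : sInf C ≤ sInf A * sInf B := by
  have hpa : 0 ≤ sInf A := Real.sInf_nonneg hA0
  have hpb : 0 ≤ sInf B := Real.sInf_nonneg hB0
  apply le_of_forall_pos_le_add
  intro ε hε
  have hden : (0 : ℝ) < sInf A + sInf B + 1 := by linarith
  set δ := min 1 (ε / (sInf A + sInf B + 1)) with hδdef
  have hδpos : 0 < δ := lt_min one_pos (div_pos hε hden)
  obtain ⟨x, hxA, hx⟩ := exists_lt_of_csInf_lt hA (by linarith : sInf A < sInf A + δ)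
  obtain ⟨y, hyB, hy⟩ := exists_lt_of_csInf_lt hB (by linarith : sInf B < sInf B + δ)
  have h1 : sInf C ≤ x * y := csInf_le hC (h x hxA y hyB)
  have hx0 := hA0 x hxA
  have hy0 := hB0 y hyB
  have hδ1 : δ ≤ 1 := min_le_left _ _
  have hδ2 : δ * (sInf A + sInf B + 1) ≤ ε := by
    have hh := min_le_right 1 (ε / (sInf A + sInf B + 1))
    calc δ * (sInf A + sInf B + 1)
        ≤ (ε / (sInf A + sInf B + 1)) * (sInf A + sInf B + 1) :=
          mul_le_mul_of_nonneg_right hh (le_of_lt hden)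
      _ = ε := div_mul_cancel₀ _ (ne_of_gt hden)
  have h2 : x * y ≤ (sInf A + δ) * (sInf B + δ) :=
    mul_le_mul hx.le hy.le hy0 (by linarith)
  nlinarith


lemma LLF_clique_product {G : SimpleGraph α'} {K : SimpleGraph β'} {s : Finset α'} {t : Finset β'}
    (hs : G.IsClique (s : Set α')) (ht : K.IsClique (t : Set β')) :
    (disjProd G K).IsClique ((s ×ˢ t : Finset (α' × β')) : Set (α' × β')) := by
  rintro ⟨a, b⟩ hab ⟨a', b'⟩ hab' hne
  rw [Finset.mem_coe, Finset.mem_product] at hab hab'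
  by_cases haa : a = a'
  · subst haa
    have hbb : b ≠ b' := fun h => hne (by rw [h])
    exact Or.inr (ht hab.2 hab'.2 hbb)
  · exact Or.inl (hs hab.1 hab'.1 haa)

end LLFHelpers

universe w

/-- For a linear-like semiring family, the fractional `F`-number is multiplicative
on lexicographic and on disjunctive products. -/
theorem linearLike_etaFrac_multiplicative (F : LinearLikeFamily.{u}) {α : Type v} {β : Type w}
    [Fintype α] [Fintype β] (G : SimpleGraph α) (H : SimpleGraph β) :
    etaFrac F.toSemiringFamily (lexProd G H)
        = etaFrac F.toSemiringFamily G * etaFrac F.toSemiringFamily H ∧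
      etaFrac F.toSemiringFamily (disjProd G H)
        = etaFrac F.toSemiringFamily G * etaFrac F.toSemiringFamily H  := by
  classical
  have hAG : (LLF_Aset F.toSemiringFamily G).Nonempty := LLF_Aset_nonempty _ G
  have hAH : (LLF_Aset F.toSemiringFamily H).Nonempty := LLF_Aset_nonempty _ H
  have hALex : (LLF_Aset F.toSemiringFamily (lexProd G H)).Nonempty := LLF_Aset_nonempty _ _
  have hADisj : (LLF_Aset F.toSemiringFamily (disjProd G H)).Nonempty := LLF_Aset_nonempty _ _
  -- (a) every target of the disjunctive product is a target of the lexicographic product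
  have hsub : LLF_Aset F.toSemiringFamily (disjProd G H)
      ⊆ LLF_Aset F.toSemiringFamily (lexProd G H) := by
    rintro x ⟨n, d, hd, ⟨ψ⟩, rfl⟩
    refine ⟨n, d, hd, ⟨⟨fun p => ψ p, ?_⟩⟩, rfl⟩
    intro p q hpq
    apply ψ.map_rel
    rcases hpq with h | ⟨heq, h⟩
    · exact Or.inl h
    · exact Or.inr h
  have ha : etaFrac F.toSemiringFamily (lexProd G H)
      ≤ etaFrac F.toSemiringFamily (disjProd G H) :=
    csInf_le_csInf (LLF_Aset_bddBelow _ _) hADisj hsub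
  -- (b) products of members are members for the disjunctive product
  have hmulmem : ∀ x ∈ LLF_Aset F.toSemiringFamily G, ∀ y ∈ LLF_Aset F.toSemiringFamily H,
      x * y ∈ LLF_Aset F.toSemiringFamily (disjProd G H) := by
    rintro x ⟨n, d, hd, ⟨φG⟩, rfl⟩ y ⟨m, e, he, ⟨φH⟩, rfl⟩
    obtain ⟨μ⟩ := F.toSemiringFamily.mul_hom n m
    have hde : 1 ≤ d * e := Nat.one_le_iff_ne_zero.mpr (Nat.mul_ne_zero (by omega) (by omega))
    have hpc : ∀ p : α × β, (disjProd (F.toSemiringFamily.F n) (F.toSemiringFamily.F m)).IsClique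
        ((((φG p.1).1 ×ˢ (φH p.2).1 : Finset _)) : Set _) :=
      fun p => LLF_clique_product (φG p.1).2.2 (φH p.2).2.2
    refine ⟨n * m, d * e, hde, ?_, ?_⟩
    · apply LLF_homBuild hde (fun p => ((φG p.1).1 ×ˢ (φH p.2).1).image μ)
      · intro p
        rw [Finset.card_image_of_injOn (LLF_injOn_of_clique μ (hpc p)), Finset.card_product,
          (φG p.1).2.1, (φH p.2).2.1]
      · intro p
        exact LLF_isClique_image μ (hpc p)
      · rintro p q hpq x hx y hy
        obtain ⟨u, hu, rfl⟩ := Finset.mem_image.mp hx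
        obtain ⟨v, hv, rfl⟩ := Finset.mem_image.mp hy
        obtain ⟨hu1, hu2⟩ := Finset.mem_product.mp hu
        obtain ⟨hv1, hv2⟩ := Finset.mem_product.mp hv
        apply μ.map_rel
        rcases hpq with h | h
        · exact Or.inl ((φG.map_rel h).2.2 u.1 hu1 v.1 hv1)
        · exact Or.inr ((φH.map_rel h).2.2 u.2 hu2 v.2 hv2)
    · push_cast
      rw [div_mul_div_comm]
  have hb : etaFrac F.toSemiringFamily (disjProd G H)
      ≤ etaFrac F.toSemiringFamily G * etaFrac F.toSemiringFamily H :=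
    LLF_sInf_mul_le hAG hAH (LLF_Aset_nonneg _ _) (LLF_Aset_nonneg _ _)
      (LLF_Aset_bddBelow _ _) hmulmem
  -- (c) the hard direction
  have hc : ∀ z ∈ LLF_Aset F.toSemiringFamily (lexProd G H),
      etaFrac F.toSemiringFamily G * etaFrac F.toSemiringFamily H ≤ z := by
    rintro z ⟨n, d, hd, ⟨φ⟩, rfl⟩
    rcases isEmpty_or_nonempty α with hα | hα
    · haveI := hα
      rw [LLF_etaFrac_eq_zero F.toSemiringFamily G, zero_mul]
      positivity
    rcases isEmpty_or_nonempty β with hβ | hβ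
    · haveI := hβ
      rw [LLF_etaFrac_eq_zero F.toSemiringFamily H, mul_zero]
      positivity
    obtain ⟨h₀⟩ := hβ
    set Fn := F.toSemiringFamily.F n with hFndef
    set T : α → Set (F.toSemiringFamily.V n) :=
      fun g => ⋃ h : β, (((φ (g, h)).1 : Finset _) : Set _) with hTdef
    set S : α → Set (F.toSemiringFamily.V n) := fun g => perp Fn (perp Fn (T g)) with hSdef
    have hsubT : ∀ g h, (((φ (g, h)).1 : Finset _) : Set _) ⊆ T g := by
      intro g h
      exact Set.subset_iUnion (fun h' : β => (((φ (g, h')).1 : Finset (F.toSemiringFamily.V n)) : Set (F.toSemiringFamily.V n))) h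
    have hTS : ∀ g, T g ⊆ S g := fun g => LLF_subset_perp_perp Fn (T g)
    have hflat : ∀ g, IsFlat Fn (S g) := fun g => LLF_isFlat_perp_perp Fn (T g)
    have hsubS : ∀ g h, (((φ (g, h)).1 : Finset _) : Set _) ⊆ S g :=
      fun g h => (hsubT g h).trans (hTS g)
    choose k hk using fun g => F.linearLike n (S g) (hflat g)
    -- each k g is at least d
    have hdk : ∀ g, d ≤ k g := by
      intro g
      by_contra hlt
      push_neg at hlt
      have hCdcard : (LLF_subFinset (φ (g, h₀)).1 (hsubS g h₀)).card = d := by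
        rw [LLF_card_subFinset]; exact (φ (g, h₀)).2.1
      have hCdclique : (Fn.induce (S g)).IsClique
          ((LLF_subFinset (φ (g, h₀)).1 (hsubS g h₀) : Finset _) : Set _) := by
        intro x hx y hy hxy
        have hx' := (LLF_mem_subFinset (hsubS g h₀) x).mp (Finset.mem_coe.mp hx)
        have hy' := (LLF_mem_subFinset (hsubS g h₀) y).mp (Finset.mem_coe.mp hy)
        exact (φ (g, h₀)).2.2 (Finset.mem_coe.mpr hx') (Finset.mem_coe.mpr hy')
          (fun hv => hxy (Subtype.ext hv))
      obtain ⟨t, hts, htcard⟩ :=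
        Finset.exists_subset_card_eq (s := LLF_subFinset (φ (g, h₀)).1 (hsubS g h₀)) (n := k g + 1) (by omega)
      exact (hk g).2.1 t ⟨hCdclique.subset (Finset.coe_subset.mpr hts), htcard⟩
    have hm0 : (Finset.univ : Finset α).Nonempty := Finset.univ_nonempty
    set m := Finset.univ.inf' hm0 k with hmdef
    obtain ⟨g₀, -, hg₀⟩ := Finset.exists_mem_eq_inf' hm0 k
    have hdm : d ≤ m := Finset.le_inf' hm0 k (fun g _ => hdk g)
    have hm1 : 1 ≤ m := le_trans hd hdm
    -- etaFrac H ≤ m / d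
    have hpbmem : ((m : ℝ) / d) ∈ LLF_Aset F.toSemiringFamily H := by
      refine ⟨m, d, hd, ?_, rfl⟩
      obtain ⟨f⟩ := (hk g₀).2.2.1
      have hbase : Nonempty (H →g fracGraph (Fn.induce (S g₀)) d) := by
        apply LLF_homBuild hd (fun h => LLF_subFinset (φ (g₀, h)).1 (hsubS g₀ h))
        · intro h; rw [LLF_card_subFinset]; exact (φ (g₀, h)).2.1
        · intro h
          intro x hx y hy hxy
          have hx' := (LLF_mem_subFinset (hsubS g₀ h) x).mp (Finset.mem_coe.mp hx)
          have hy' := (LLF_mem_subFinset (hsubS g₀ h) y).mp (Finset.mem_coe.mp hy)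
          exact (φ (g₀, h)).2.2 (Finset.mem_coe.mpr hx') (Finset.mem_coe.mpr hy')
            (fun hv => hxy (Subtype.ext hv))
        · intro h h' hhh x hx y hy
          have hadj := φ.map_rel (show (lexProd G H).Adj (g₀, h) (g₀, h') from Or.inr ⟨rfl, hhh⟩)
          have hx' := (LLF_mem_subFinset (hsubS g₀ h) x).mp hx
          have hy' := (LLF_mem_subFinset (hsubS g₀ h') y).mp hy
          exact hadj.2.2 x.1 hx' y.1 hy'
      obtain ⟨base⟩ := hbase
      obtain ⟨fr⟩ := LLF_fracHom f d
      rw [hmdef.trans hg₀]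
      exact ⟨fr.comp base⟩
    -- etaFrac G ≤ n / m
    have hpamem : ((n : ℝ) / m) ∈ LLF_Aset F.toSemiringFamily G := by
      refine ⟨n, m, hm1, ?_, rfl⟩
      have hC : ∀ g, ∃ C : Finset (F.toSemiringFamily.V n),
          C.card = m ∧ Fn.IsClique (C : Set _) ∧ (C : Set _) ⊆ S g := by
        intro g
        obtain ⟨s, hs⟩ := (hk g).1
        obtain ⟨t, hts, htcard⟩ := Finset.exists_subset_card_eq (s := s) (n := m)
          (by rw [hs.2]; exact Finset.inf'_le k (Finset.mem_univ g))
        refine ⟨t.image Subtype.val, ?_, ?_, ?_⟩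
        · rw [Finset.card_image_of_injective t Subtype.val_injective]; exact htcard
        · intro x hx y hy hxy
          rw [Finset.coe_image] at hx hy
          obtain ⟨x', hx', rfl⟩ := hx
          obtain ⟨y', hy', rfl⟩ := hy
          have hne : x' ≠ y' := fun hv => hxy (by rw [hv])
          exact hs.1.subset (Finset.coe_subset.mpr hts) hx' hy' hne
        · intro x hx
          rw [Finset.coe_image] at hx
          obtain ⟨x', _, rfl⟩ := hx
          exact x'.2
      choose C hCcard hCclique hCsub using hC
      apply LLF_homBuild hm1 C hCcard hCclique
      intro g g' hgg' x hx y hy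
      have hTperp : T g' ⊆ perp Fn (T g) := by
        intro u hu w hw
        rw [hTdef, Set.mem_iUnion] at hu hw
        obtain ⟨h', hu⟩ := hu
        obtain ⟨h, hw⟩ := hw
        have hadj := φ.map_rel (show (lexProd G H).Adj (g, h) (g', h') from Or.inl hgg')
        exact (hadj.2.2 w (Finset.mem_coe.mp hw) u (Finset.mem_coe.mp hu)).symm
      have hSperp : S g' ⊆ perp Fn (S g) := by
        intro v hv
        have h2 : perp Fn (perp Fn (T g')) ⊆ perp Fn (T g) := by
          rw [← LLF_perp_perp_perp Fn (T g)]
          exact LLF_perp_anti Fn (LLF_perp_anti Fn hTperp)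
        have h1 : v ∈ perp Fn (T g) := h2 hv
        have h3 : perp Fn (S g) = perp Fn (T g) := LLF_perp_perp_perp Fn (T g)
        rw [h3]
        exact h1
      have hy' : (y : F.toSemiringFamily.V n) ∈ perp Fn (S g) :=
        hSperp (hCsub g' (Finset.mem_coe.mpr hy))
      exact (hy' x (hCsub g (Finset.mem_coe.mpr hx))).symm
    have hmn : ((m : ℕ) : ℝ) ≠ 0 := Nat.cast_ne_zero.mpr (by omega)
    calc etaFrac F.toSemiringFamily G * etaFrac F.toSemiringFamily H
        ≤ ((n : ℝ) / m) * ((m : ℝ) / d) :=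
          mul_le_mul (LLF_etaFrac_le _ _ hpamem) (LLF_etaFrac_le _ _ hpbmem)
            (LLF_etaFrac_nonneg _ _) (by positivity)
      _ = (n : ℝ) / d := by
          rw [div_mul_div_comm, mul_comm ((m : ℕ) : ℝ) ((d : ℕ) : ℝ),
            mul_div_mul_right _ _ hmn]
  have hc' : etaFrac F.toSemiringFamily G * etaFrac F.toSemiringFamily H
      ≤ etaFrac F.toSemiringFamily (lexProd G H) := le_csInf hALex hc
  constructor
  · exact le_antisymm (ha.trans hb) hc'
  · exact le_antisymm hb (hc'.trans ha)
end
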